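/- For all u > 0, H(u) := log u − u + 1 + (u − 1)²·log((u+1)/u) ≥ 0, with equality if and only if u = 1. -/

import Mathlib

open Real Set

noncomputable def Hfun (u : ℝ) : ℝ :=
  Real.log u - u + 1 + (u - 1) ^ 2 * (Real.log (u + 1) - Real.log u)

lemma Hfun_hasDerivAt {u : ℝ} (hu : 0 < u) :
    HasDerivAt Hfun
      (2 * (u - 1) * ((Real.log (u + 1) - Real.log u) - 1 / (u + 1))) u := by
  have hu0 : u ≠ 0 := ne_of_gt hu
  have hu1 : u + 1 ≠ 0 := by positivity
  have hlog : HasDerivAt Real.log u⁻¹ u := Real.hasDerivAt_log hu0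
  have hlog1 : HasDerivAt (fun x : ℝ => Real.log (x + 1)) (u + 1)⁻¹ u := by
    have h := (Real.hasDerivAt_log hu1).comp u ((hasDerivAt_id u).add_const 1)
    simpa [Function.comp_def] using h
  have hsq : HasDerivAt (fun x : ℝ => (x - 1) ^ 2) (2 * (u - 1)) u := by
    have h := ((hasDerivAt_id u).sub_const 1).pow 2
    simpa [Pi.pow_def] using h
  have hdiff : HasDerivAt (fun x : ℝ => Real.log (x + 1) - Real.log x)
      ((u + 1)⁻¹ - u⁻¹) u := hlog1.sub hlog
  have hprod : HasDerivAt (fun x : ℝ => (x - 1) ^ 2 * (Real.log (x + 1) - Real.log x))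
      (2 * (u - 1) * (Real.log (u + 1) - Real.log u) + (u - 1) ^ 2 * ((u + 1)⁻¹ - u⁻¹)) u :=
    hsq.mul hdiff
  have hmain : HasDerivAt Hfun
      (u⁻¹ - 1 + (2 * (u - 1) * (Real.log (u + 1) - Real.log u)
        + (u - 1) ^ 2 * ((u + 1)⁻¹ - u⁻¹))) u := by
    have h := (((hlog.sub (hasDerivAt_id u)).add_const 1).add hprod)
    refine h.congr_of_eventuallyEq (Filter.Eventually.of_forall fun x => ?_)
    simp [Hfun] <;> ring
  convert hmain using 1
  field_simp
  ring

lemma Hfun_pos_of_gt {u : ℝ} (hu : 1 < u) : 0 < Hfun u := by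
  have hmono : StrictMonoOn Hfun (Ici 1) := by
    apply strictMonoOn_of_deriv_pos (convex_Ici 1)
    · intro x hx
      exact (Hfun_hasDerivAt (lt_of_lt_of_le one_pos hx)).continuousAt.continuousWithinAt
    · intro x hx
      rw [interior_Ici] at hx
      have hx0 : (0 : ℝ) < x := lt_trans one_pos hx
      rw [(Hfun_hasDerivAt hx0).deriv]
      have hfac : 0 < (Real.log (x + 1) - Real.log x) - 1 / (x + 1) := by
        have hxx : (0 : ℝ) < x / (x + 1) := by positivity
        have hne : x / (x + 1) ≠ 1 := by
          intro h
          have h2 : x = x + 1 := by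
            field_simp at h
            exact h
          linarith
        have h := Real.log_lt_sub_one_of_pos hxx hne
        rw [Real.log_div (ne_of_gt hx0) (by positivity)] at h
        have : x / (x + 1) - 1 = -(1 / (x + 1)) := by field_simp; ring
        rw [this] at h
        linarith
      have hx1 : (1:ℝ) < x := hx
      have hp : 0 < 2 * (x - 1) := by linarith
      exact mul_pos hp hfac
  have h1 : Hfun 1 < Hfun u := hmono Set.self_mem_Ici (le_of_lt hu) hu
  have hH1 : Hfun 1 = 0 := by simp [Hfun]
  linarith

lemma Hfun_pos_of_lt {u : ℝ} (hu0 : 0 < u) (hu : u < 1) : 0 < Hfun u := by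
  have hanti : StrictAntiOn Hfun (Ioc 0 1) := by
    apply strictAntiOn_of_deriv_neg (convex_Ioc 0 1)
    · intro x hx
      exact (Hfun_hasDerivAt hx.1).continuousAt.continuousWithinAt
    · intro x hx
      rw [interior_Ioc] at hx
      have hx0 : (0 : ℝ) < x := hx.1
      rw [(Hfun_hasDerivAt hx0).deriv]
      have hfac : 0 < (Real.log (x + 1) - Real.log x) - 1 / (x + 1) := by
        have hxx : (0 : ℝ) < x / (x + 1) := by positivity
        have hne : x / (x + 1) ≠ 1 := by
          intro h
          have h2 : x = x + 1 := by
            field_simp at h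
            exact h
          linarith
        have h := Real.log_lt_sub_one_of_pos hxx hne
        rw [Real.log_div (ne_of_gt hx0) (by positivity)] at h
        have : x / (x + 1) - 1 = -(1 / (x + 1)) := by field_simp; ring
        rw [this] at h
        linarith
      have hneg : 2 * (x - 1) < 0 := by
        have := hx.2
        linarith
      exact mul_neg_of_neg_of_pos hneg hfac
  have h1 : Hfun 1 < Hfun u :=
    hanti ⟨hu0, le_of_lt hu⟩ ⟨one_pos, le_refl 1⟩ hu
  have hH1 : Hfun 1 = 0 := by simp [Hfun]
  linarith

theorem hsi_scalar_inequality (u : ℝ) (hu : 0 < u) :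
    0 ≤ Real.log u - u + 1 + (u - 1) ^ 2 * Real.log ((u + 1) / u) ∧
    (Real.log u - u + 1 + (u - 1) ^ 2 * Real.log ((u + 1) / u) = 0 ↔ u = 1) := by
  have hrw : Real.log u - u + 1 + (u - 1) ^ 2 * Real.log ((u + 1) / u) = Hfun u := by
    rw [Real.log_div (by positivity) (ne_of_gt hu)]
    rfl
  rw [hrw]
  rcases lt_trichotomy u 1 with h | h | h
  · have hpos := Hfun_pos_of_lt hu h
    exact ⟨le_of_lt hpos, by constructor <;> intro h' <;> [linarith; linarith]⟩
  · subst h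
    have : Hfun 1 = 0 := by simp [Hfun]
    exact ⟨le_of_eq this.symm, by simp [this]⟩
  · have hpos := Hfun_pos_of_gt h
    exact ⟨le_of_lt hpos, by constructor <;> intro h' <;> [linarith; linarith]⟩
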